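/- Let X be a measurable space, μ a probability measure on X, f* : X → ℝ measurable, and q : X × ℝ → [0,∞) measurable such that for each x, q(x,·) is a probability density on ℝ that is twice continuously differentiable in the second variable, with B := sup_{x∈X, t∈ℝ} |∂²_t q(x,t)| < ∞ (Assumption 1). Let φ : ℝ → [0,∞) be bounded, even, with ∫_ℝ φ(u) du = 1 and ∫_ℝ u² φ(u) du < ∞ (calibrated modal regression kernel). Then for every measurable f : X → ℝ and every σ > 0, | (R(f*) − R(f)) − (R^σ(f*) − R^σ(f)) | ≤ c₁ σ², where c₁ = B · ∫_ℝ u² φ(u) du (Theorem 4.2, the modal regression calibration/comparison theorem). -/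

import Mathlib

open MeasureTheory intervalIntegral

lemma taylor2 {g : ℝ → ℝ} (hg : ContDiff ℝ 2 g) {B : ℝ}
    (hB : ∀ t, |deriv (deriv g) t| ≤ B) (a s : ℝ) :
    |g (a + s) - g a - s * deriv g a| ≤ B * s ^ 2 / 2 := by
  have hg2 : ContDiff ℝ ((1:WithTop ℕ∞) + 1) g := by
    have : ((1:WithTop ℕ∞) + 1) = 2 := by norm_num
    rw [this]; exact hg
  rw [contDiff_succ_iff_deriv] at hg2
  obtain ⟨hgd, -, hg1⟩ := hg2
  have hgd' : Differentiable ℝ (deriv g) := hg1.differentiable one_ne_zero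
  have hgc : Continuous (deriv g) := hg1.continuous
  have hlip : ∀ t u : ℝ, |deriv g t - deriv g u| ≤ B * |t - u| := by
    intro t u
    have := Convex.norm_image_sub_le_of_norm_deriv_le (f := deriv g)
      (fun x _ => hgd' x)
      (fun x _ => by simpa [Real.norm_eq_abs] using hB x)
      convex_univ (Set.mem_univ u) (Set.mem_univ t)
    simpa [Real.norm_eq_abs] using this
  set F : ℝ → ℝ := fun t => g (a + t) - g a - t * deriv g a with hF
  have hFd : ∀ t : ℝ, HasDerivAt F (deriv g (a + t) - deriv g a) t := by
    intro t
    have h1 : HasDerivAt (fun t : ℝ => g (a + t)) (deriv g (a + t)) t := by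
      have := ((hgd (a + t)).hasDerivAt).comp t ((hasDerivAt_id t).const_add a)
      simpa [Function.comp_def] using this
    exact ((h1.sub_const (g a)).sub ((hasDerivAt_id t).mul_const (deriv g a))).congr_deriv (by ring)
  have hcont : Continuous fun t => deriv g (a + t) - deriv g a :=
    (hgc.comp (continuous_const.add continuous_id)).sub continuous_const
  have hFint : F s = ∫ t in (0:ℝ)..s, (deriv g (a + t) - deriv g a) := by
    rw [intervalIntegral.integral_eq_sub_of_hasDerivAt (fun t _ => hFd t)
      (hcont.intervalIntegrable _ _)]
    simp [hF]
  have habs : ∀ t : ℝ, |deriv g (a + t) - deriv g a| ≤ B * |t| := by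
    intro t; simpa using hlip (a + t) a
  have hint1 : ∀ u v : ℝ, IntervalIntegrable (fun t => |deriv g (a+t) - deriv g a|) volume u v :=
    fun u v => (hcont.abs).intervalIntegrable u v
  have hint2 : ∀ u v : ℝ, IntervalIntegrable (fun t : ℝ => B * |t|) volume u v :=
    fun u v => (continuous_const.mul continuous_abs).intervalIntegrable u v
  have key : |F s| ≤ B * s ^ 2 / 2 := by
    rw [hFint]
    refine le_trans (by
      simpa [Real.norm_eq_abs] using
        intervalIntegral.norm_integral_le_abs_integral_norm
          (f := fun t => deriv g (a+t) - deriv g a) (a := (0:ℝ)) (b := s) (μ := volume)) ?_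
    rcases le_or_gt 0 s with hs | hs
    · have h1 : (∫ t in (0:ℝ)..s, |deriv g (a+t) - deriv g a|)
          ≤ ∫ t in (0:ℝ)..s, B * |t| :=
        intervalIntegral.integral_mono_on hs (hint1 0 s) (hint2 0 s)
          (fun t _ => habs t)
      have h2 : (∫ t in (0:ℝ)..s, B * |t|) = B * s ^ 2 / 2 := by
        rw [intervalIntegral.integral_congr (g := fun t : ℝ => B * t)
          (fun t ht => by rw [Set.uIcc_of_le hs] at ht; rw [abs_of_nonneg ht.1])]
        rw [intervalIntegral.integral_const_mul]
        rw [integral_id]; ring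
      have h0 : (0:ℝ) ≤ ∫ t in (0:ℝ)..s, |deriv g (a+t) - deriv g a| :=
        intervalIntegral.integral_nonneg hs (fun t _ => abs_nonneg _)
      rw [abs_of_nonneg h0]; linarith
    · have hs' : s ≤ 0 := hs.le
      rw [intervalIntegral.integral_symm]
      have h1 : (∫ t in s..(0:ℝ), |deriv g (a+t) - deriv g a|)
          ≤ ∫ t in s..(0:ℝ), B * |t| :=
        intervalIntegral.integral_mono_on hs' (hint1 s 0) (hint2 s 0)
          (fun t _ => habs t)
      have h2 : (∫ t in s..(0:ℝ), B * |t|) = B * s ^ 2 / 2 := by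
        rw [intervalIntegral.integral_congr (g := fun t : ℝ => -(B * t))
          (fun t ht => by
            rw [Set.uIcc_of_le hs'] at ht
            rw [abs_of_nonpos ht.2, mul_neg])]
        rw [intervalIntegral.integral_neg, intervalIntegral.integral_const_mul, integral_id]
        ring
      have h0 : (0:ℝ) ≤ ∫ t in s..(0:ℝ), |deriv g (a+t) - deriv g a| :=
        intervalIntegral.integral_nonneg hs' (fun t _ => abs_nonneg _)
      rw [abs_neg, abs_of_nonneg h0]; linarith
  simpa [hF] using key

lemma density_bound {g : ℝ → ℝ} (hg : ContDiff ℝ 2 g) {B : ℝ}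
    (hB : ∀ t, |deriv (deriv g) t| ≤ B) (hnn : ∀ t, 0 ≤ g t)
    (hint : Integrable g) (h1 : ∫ t, g t = 1) (t0 : ℝ) :
    g t0 ≤ 1 / 2 + B / 6 := by
  have hgc : Continuous g := hg.continuous
  have hlow : ∀ s : ℝ, g t0 + s * deriv g t0 - B * s ^ 2 / 2 ≤ g (t0 + s) := by
    intro s
    have := abs_le.mp (taylor2 hg hB t0 s)
    linarith [this.1]
  have hIi : (∫ s in (-1:ℝ)..1, g (t0 + s)) = ∫ t in (t0 - 1)..(t0 + 1), g t := by
    have := intervalIntegral.integral_comp_add_left (a := (-1:ℝ)) (b := 1) g t0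
    simpa [add_comm, sub_eq_add_neg] using this
  have hle1 : (∫ t in (t0 - 1)..(t0 + 1), g t) ≤ 1 := by
    rw [intervalIntegral.integral_of_le (by linarith)]
    calc (∫ t in Set.Ioc (t0-1) (t0+1), g t) ≤ ∫ t, g t :=
          setIntegral_le_integral hint (Filter.Eventually.of_forall hnn)
      _ = 1 := h1
  have hmono : (∫ s in (-1:ℝ)..1, (g t0 + s * deriv g t0 - B * s ^ 2 / 2))
      ≤ ∫ s in (-1:ℝ)..1, g (t0 + s) := by
    apply intervalIntegral.integral_mono_on (by norm_num)
    · exact (Continuous.intervalIntegrable (by continuity) _ _)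
    · exact ((hgc.comp (continuous_const.add continuous_id)).intervalIntegrable _ _)
    · exact fun s _ => hlow s
  have hcomp : (∫ s in (-1:ℝ)..1, (g t0 + s * deriv g t0 - B * s ^ 2 / 2))
      = 2 * g t0 - B / 3 := by
    rw [intervalIntegral.integral_sub, intervalIntegral.integral_add]
    · simp_rw [div_eq_mul_inv, mul_comm (B : ℝ), mul_assoc]
      rw [intervalIntegral.integral_const, intervalIntegral.integral_mul_const,
        integral_id, intervalIntegral.integral_mul_const, integral_pow]
      norm_num; ring
    · exact (Continuous.intervalIntegrable (by continuity) _ _)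
    · exact (Continuous.intervalIntegrable (by continuity) _ _)
    · exact (Continuous.intervalIntegrable (by continuity) _ _)
    · exact (Continuous.intervalIntegrable (by continuity) _ _)
  have : 2 * g t0 - B / 3 ≤ 1 := by
    rw [← hcomp]; rw [hIi] at hmono; linarith
  linarith

lemma cov {σ : ℝ} (hσ : 0 < σ) (b : ℝ) (φ q1 : ℝ → ℝ) :
    (∫ t, (1 / σ) * φ ((t - b) / σ) * q1 t) = ∫ u, φ u * q1 (b + σ * u) := by
  set G : ℝ → ℝ := fun u => φ u * q1 (b + σ * u) with hG
  have hpt : ∀ t : ℝ, (1 / σ) * φ ((t - b) / σ) * q1 t = (1 / σ) * G ((t - b) / σ) := by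
    intro t
    have : b + σ * ((t - b) / σ) = t := by field_simp; ring
    rw [hG]; simp only [this]; ring
  simp_rw [hpt]
  rw [MeasureTheory.integral_const_mul]
  have h1 : (∫ t : ℝ, G ((t - b) / σ)) = ∫ s : ℝ, G (s / σ) :=
    integral_sub_right_eq_self (fun s => G (s / σ)) b
  have h2 : (∫ s : ℝ, G (s / σ)) = |σ| • ∫ u, G u := Measure.integral_comp_div G σ
  rw [h1, h2, abs_of_pos hσ, smul_eq_mul]
  field_simp

lemma pointbound {q1 φ : ℝ → ℝ} {B σ Cq : ℝ}
    (hq : ContDiff ℝ 2 q1) (hB : ∀ t, |deriv (deriv q1) t| ≤ B)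
    (hq0 : ∀ t, 0 ≤ q1 t) (hqb : ∀ t, q1 t ≤ Cq)
    (hφ_meas : Measurable φ) (hφ_nonneg : ∀ u, 0 ≤ φ u)
    (hφ_even : ∀ u, φ (-u) = φ u) (hφ_int : ∫ u, φ u = 1)
    (hφ_mom : Integrable (fun u => u ^ 2 * φ u)) (hφi : Integrable φ)
    (hσ : 0 < σ) (b : ℝ) :
    |q1 b - ∫ u, φ u * q1 (b + σ * u)| ≤ B * (∫ u, u ^ 2 * φ u) * σ ^ 2 / 2 := by
  have hq1c : Continuous q1 := hq.continuous
  -- integrability facts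
  have Imom : Integrable (fun u : ℝ => u * φ u) := by
    refine (hφi.add hφ_mom).mono' ((measurable_id.mul hφ_meas).aestronglyMeasurable)
      (Filter.Eventually.of_forall fun u => ?_)
    have h1 : |u| ≤ 1 + u ^ 2 := by nlinarith [sq_nonneg (|u| - 1), sq_abs u]
    have : ‖u * φ u‖ = |u| * φ u := by
      rw [Real.norm_eq_abs, abs_mul, abs_of_nonneg (hφ_nonneg u)]
    rw [this]
    calc |u| * φ u ≤ (1 + u ^ 2) * φ u := by
          exact mul_le_mul_of_nonneg_right h1 (hφ_nonneg u)
      _ = φ u + u ^ 2 * φ u := by ring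
  have I1 : Integrable (fun u : ℝ => φ u * q1 b) := hφi.mul_const _
  have I2 : Integrable (fun u : ℝ => φ u * (σ * u * deriv q1 b)) := by
    have : (fun u : ℝ => φ u * (σ * u * deriv q1 b))
        = fun u => (σ * deriv q1 b) * (u * φ u) := by ext u; ring
    rw [this]; exact Imom.const_mul _
  have I3 : Integrable (fun u : ℝ => φ u * q1 (b + σ * u)) := by
    refine (hφi.const_mul Cq).mono'
      ((hφ_meas.mul ((hq1c.measurable).comp (measurable_const.add
        (measurable_const.mul measurable_id)))).aestronglyMeasurable)
      (Filter.Eventually.of_forall fun u => ?_)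
    rw [Real.norm_eq_abs, abs_mul, abs_of_nonneg (hφ_nonneg u),
      abs_of_nonneg (hq0 _), mul_comm]
    exact mul_le_mul_of_nonneg_right (hqb _) (hφ_nonneg u)
  -- the two identities
  have e1 : q1 b = ∫ u, φ u * q1 b := by
    rw [MeasureTheory.integral_mul_const, hφ_int, one_mul]
  have eodd : (∫ u : ℝ, u * φ u) = 0 := by
    have h := integral_neg_eq_self (fun u : ℝ => u * φ u) volume
    have h2 : (∫ u : ℝ, (-u) * φ (-u)) = ∫ u : ℝ, -(u * φ u) := by
      congr 1; ext u; rw [hφ_even]; ring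
    rw [h2, MeasureTheory.integral_neg] at h
    linarith
  have e2 : (∫ u : ℝ, φ u * (σ * u * deriv q1 b)) = 0 := by
    have : (fun u : ℝ => φ u * (σ * u * deriv q1 b))
        = fun u => (σ * deriv q1 b) * (u * φ u) := by ext u; ring
    rw [this, MeasureTheory.integral_const_mul, eodd, mul_zero]
  have e3 : q1 b - (∫ u, φ u * q1 (b + σ * u))
      = ∫ u, (φ u * q1 b + φ u * (σ * u * deriv q1 b) - φ u * q1 (b + σ * u)) := by
    have I12 : Integrable (fun u : ℝ => φ u * q1 b + φ u * (σ * u * deriv q1 b)) :=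
      I1.add I2
    rw [integral_sub I12 I3, integral_add I1 I2, ← e1, e2, add_zero]
  rw [e3]
  have hptw : ∀ u : ℝ, |φ u * q1 b + φ u * (σ * u * deriv q1 b) - φ u * q1 (b + σ * u)|
      ≤ (B * σ ^ 2 / 2) * (u ^ 2 * φ u) := by
    intro u
    have ht := taylor2 hq hB b (σ * u)
    have : φ u * q1 b + φ u * (σ * u * deriv q1 b) - φ u * q1 (b + σ * u)
        = -(φ u * (q1 (b + σ * u) - q1 b - (σ * u) * deriv q1 b)) := by ring
    rw [this, abs_neg, abs_mul, abs_of_nonneg (hφ_nonneg u)]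
    calc φ u * |q1 (b + σ * u) - q1 b - (σ * u) * deriv q1 b|
        ≤ φ u * (B * (σ * u) ^ 2 / 2) := mul_le_mul_of_nonneg_left ht (hφ_nonneg u)
      _ = (B * σ ^ 2 / 2) * (u ^ 2 * φ u) := by ring
  calc |∫ u, (φ u * q1 b + φ u * (σ * u * deriv q1 b) - φ u * q1 (b + σ * u))|
      ≤ ∫ u, |φ u * q1 b + φ u * (σ * u * deriv q1 b) - φ u * q1 (b + σ * u)| := by
        simpa [Real.norm_eq_abs] using norm_integral_le_integral_norm
          (fun u : ℝ => φ u * q1 b + φ u * (σ * u * deriv q1 b) - φ u * q1 (b + σ * u))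
    _ ≤ ∫ u, (B * σ ^ 2 / 2) * (u ^ 2 * φ u) := by
        refine integral_mono_of_nonneg (Filter.Eventually.of_forall fun u => abs_nonneg _)
          (hφ_mom.const_mul _) (Filter.Eventually.of_forall fun u => hptw u)
    _ = B * (∫ u, u ^ 2 * φ u) * σ ^ 2 / 2 := by
        rw [MeasureTheory.integral_const_mul]; ring

/-- Theorem 4.2 (modal regression calibration / comparison theorem): under
Assumption 1 on the conditional noise densities and for a calibrated modal
regression kernel with representing function `φ`, the excess modal regression
risk and the excess generalization risk differ by at most `c₁ σ²`, where
`c₁ = B·∫ u² φ(u) du` and `B` bounds `|∂²_t q(x,t)|`. -/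
theorem modal_regression_calibration
    {X : Type*} [MeasurableSpace X] (μ : Measure X) [IsProbabilityMeasure μ]
    (fstar : X → ℝ) (hfstar : Measurable fstar)
    (q : X → ℝ → ℝ) (hq_meas : Measurable (Function.uncurry q))
    (hq_nonneg : ∀ x t, 0 ≤ q x t) (hq_int : ∀ x, ∫ t, q x t = 1)
    (hq_smooth : ∀ x, ContDiff ℝ 2 (q x))
    (B : ℝ) (hB : ∀ x t, |deriv (deriv (q x)) t| ≤ B)
    (φ : ℝ → ℝ) (hφ_meas : Measurable φ) (hφ_nonneg : ∀ u, 0 ≤ φ u)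
    (hφ_bdd : ∃ Cφ : ℝ, ∀ u, φ u ≤ Cφ)
    (hφ_even : ∀ u, φ (-u) = φ u)
    (hφ_int : ∫ u, φ u = 1)
    (hφ_mom : Integrable (fun u => u ^ 2 * φ u))
    (f : X → ℝ) (hf : Measurable f) (σ : ℝ) (hσ : 0 < σ) :
    |((∫ x, q x (fstar x - fstar x) ∂μ) - ∫ x, q x (f x - fstar x) ∂μ)
        - ((∫ x, (∫ t, (1 / σ) * φ ((t - (fstar x - fstar x)) / σ) * q x t) ∂μ)
            - ∫ x, (∫ t, (1 / σ) * φ ((t - (f x - fstar x)) / σ) * q x t) ∂μ)|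
      ≤ (B * ∫ u, u ^ 2 * φ u) * σ ^ 2 := by
  -- basic facts
  have hqi : ∀ x, Integrable (q x) := by
    intro x
    by_contra h
    have := hq_int x
    rw [integral_undef h] at this
    norm_num at this
  have hφi : Integrable φ := by
    by_contra h
    rw [integral_undef h] at hφ_int
    norm_num at hφ_int
  set Cq : ℝ := 1 / 2 + B / 6 with hCq
  have hqb : ∀ x t, q x t ≤ Cq := fun x t =>
    density_bound (hq_smooth x) (hB x) (hq_nonneg x) (hqi x) (hq_int x) t
  set M : ℝ := ∫ u, u ^ 2 * φ u with hM
  have hM0 : 0 ≤ M :=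
    integral_nonneg fun u => mul_nonneg (sq_nonneg u) (hφ_nonneg u)
  have hX : Nonempty X := by
    by_contra h
    have h1 : (Set.univ : Set X) = ∅ := Set.univ_eq_empty_iff.mpr (not_nonempty_iff.mp h)
    have := measure_univ (μ := μ)
    rw [h1, measure_empty] at this
    norm_num at this
  have hB0 : 0 ≤ B := le_trans (abs_nonneg _) (hB (Classical.arbitrary X) 0)
  have hCq0 : 0 ≤ Cq := by rw [hCq]; linarith
  -- rewrite inner integrals by change of variables
  have hcov : ∀ x : X, ∀ b : ℝ,
      (∫ t, (1 / σ) * φ ((t - b) / σ) * q x t) = ∫ u, φ u * q x (b + σ * u) :=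
    fun x b => cov hσ b φ (q x)
  simp only [hcov]
  -- pointwise bounds for the two comparison terms
  have hpt : ∀ x : X, ∀ b : ℝ,
      |q x b - ∫ u, φ u * q x (b + σ * u)| ≤ B * M * σ ^ 2 / 2 := fun x b =>
    pointbound (hq_smooth x) (hB x) (hq_nonneg x) (hqb x) hφ_meas hφ_nonneg hφ_even
      hφ_int hφ_mom hφi hσ b
  -- measurability and integrability over μ
  have hqmeas1 : ∀ g : X → ℝ, Measurable g →
      Integrable (fun x => q x (g x)) μ := by
    intro g hg
    have hm : Measurable fun x => q x (g x) :=
      hq_meas.comp (measurable_id.prodMk hg)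
    refine (integrable_const Cq).mono' hm.aestronglyMeasurable
      (Filter.Eventually.of_forall fun x => ?_)
    rw [Real.norm_eq_abs, abs_of_nonneg (hq_nonneg _ _)]
    exact hqb _ _
  have hImeas : ∀ g : X → ℝ, Measurable g →
      Integrable (fun x => ∫ u, φ u * q x (g x + σ * u)) μ := by
    intro g hg
    have hm : Measurable fun p : X × ℝ => φ p.2 * q p.1 (g p.1 + σ * p.2) :=
      ((hφ_meas.comp measurable_snd).mul
        (hq_meas.comp ((measurable_fst).prodMk
          ((hg.comp measurable_fst).add (measurable_const.mul measurable_snd)))))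
    have hsm : StronglyMeasurable fun p : X × ℝ => φ p.2 * q p.1 (g p.1 + σ * p.2) :=
      hm.stronglyMeasurable
    have hmi : AEStronglyMeasurable (fun x => ∫ u, φ u * q x (g x + σ * u)) μ :=
      (hsm.integral_prod_right').aestronglyMeasurable
    refine (integrable_const Cq).mono' hmi (Filter.Eventually.of_forall fun x => ?_)
    rw [Real.norm_eq_abs, abs_of_nonneg (integral_nonneg fun u =>
      mul_nonneg (hφ_nonneg u) (hq_nonneg _ _))]
    have I3 : Integrable (fun u : ℝ => φ u * q x (g x + σ * u)) := by
      refine (hφi.const_mul Cq).mono'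
        ((hφ_meas.mul (((hq_smooth x).continuous.measurable).comp (measurable_const.add
          (measurable_const.mul measurable_id)))).aestronglyMeasurable)
        (Filter.Eventually.of_forall fun u => ?_)
      rw [Real.norm_eq_abs, abs_mul, abs_of_nonneg (hφ_nonneg u),
        abs_of_nonneg (hq_nonneg _ _), mul_comm]
      exact mul_le_mul_of_nonneg_right (hqb _ _) (hφ_nonneg u)
    calc (∫ u, φ u * q x (g x + σ * u)) ≤ ∫ u, Cq * φ u := by
          refine integral_mono I3 (hφi.const_mul Cq) fun u => ?_
          rw [mul_comm Cq]
          exact mul_le_mul_of_nonneg_left (hqb _ _) (hφ_nonneg u)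
      _ = Cq := by rw [MeasureTheory.integral_const_mul, hφ_int, mul_one]
  have Iq0 : Integrable (fun x => q x (fstar x - fstar x)) μ :=
    hqmeas1 _ (hfstar.sub hfstar)
  have Iqa : Integrable (fun x => q x (f x - fstar x)) μ := hqmeas1 _ (hf.sub hfstar)
  have II0 : Integrable (fun x => ∫ u, φ u * q x ((fstar x - fstar x) + σ * u)) μ :=
    hImeas _ (hfstar.sub hfstar)
  have IIa : Integrable (fun x => ∫ u, φ u * q x ((f x - fstar x) + σ * u)) μ :=
    hImeas _ (hf.sub hfstar)
  -- combine the four integrals into one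
  have ID1 : Integrable (fun x => q x (fstar x - fstar x) - q x (f x - fstar x)) μ :=
    Iq0.sub Iqa
  have ID2 : Integrable (fun x => (∫ u, φ u * q x ((fstar x - fstar x) + σ * u))
      - ∫ u, φ u * q x ((f x - fstar x) + σ * u)) μ := II0.sub IIa
  rw [← integral_sub Iq0 Iqa, ← integral_sub II0 IIa, ← integral_sub ID1 ID2]
  have hbound : ∀ x : X,
      ‖(q x (fstar x - fstar x) - q x (f x - fstar x))
        - ((∫ u, φ u * q x ((fstar x - fstar x) + σ * u))
            - ∫ u, φ u * q x ((f x - fstar x) + σ * u))‖ ≤ (B * M) * σ ^ 2 := by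
    intro x
    rw [Real.norm_eq_abs]
    have h1 := hpt x (fstar x - fstar x)
    have h2 := hpt x (f x - fstar x)
    calc |(q x (fstar x - fstar x) - q x (f x - fstar x))
        - ((∫ u, φ u * q x ((fstar x - fstar x) + σ * u))
            - ∫ u, φ u * q x ((f x - fstar x) + σ * u))|
        = |(q x (fstar x - fstar x) - ∫ u, φ u * q x ((fstar x - fstar x) + σ * u))
            - (q x (f x - fstar x) - ∫ u, φ u * q x ((f x - fstar x) + σ * u))| := by
          congr 1
          ring
      _ ≤ |q x (fstar x - fstar x) - ∫ u, φ u * q x ((fstar x - fstar x) + σ * u)|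
            + |q x (f x - fstar x) - ∫ u, φ u * q x ((f x - fstar x) + σ * u)| :=
          abs_sub _ _
      _ ≤ B * M * σ ^ 2 / 2 + B * M * σ ^ 2 / 2 := add_le_add h1 h2
      _ = (B * M) * σ ^ 2 := by ring
  calc ‖∫ x, ((q x (fstar x - fstar x) - q x (f x - fstar x))
        - ((∫ u, φ u * q x ((fstar x - fstar x) + σ * u))
            - ∫ u, φ u * q x ((f x - fstar x) + σ * u))) ∂μ‖
      ≤ (B * M) * σ ^ 2 * (μ Set.univ).toReal :=
        norm_integral_le_of_norm_le_const (Filter.Eventually.of_forall hbound)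
    _ = (B * M) * σ ^ 2 := by simp
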